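/- Let E be a Banach lattice and let A be an L-weakly compact subset of E. Then A is contained in the order continuous part E^a of E; that is, for every a ∈ A and every decreasing sequence (x_n) in E with 0 ≤ x_n ≤ |a| and infimum 0, one has ‖x_n‖ → 0. -/

import Mathlib

open Filter Topology

/-- The solid hull of a set in a Banach lattice. -/
def solHull {E : Type*} [NormedAddCommGroup E] [Lattice E] [HasSolidNorm E] [IsOrderedAddMonoid E] (A : Set E) : Set E :=
  {x | ∃ a ∈ A, |x| ≤ |a|}

/-- A subset of a Banach lattice is L-weakly compact (Lwc) if it is norm bounded and every
disjoint sequence in its solid hull is norm null. -/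
def IsLwcSet {E : Type*} [NormedAddCommGroup E] [Lattice E] [HasSolidNorm E] [IsOrderedAddMonoid E] (A : Set E) : Prop :=
  Bornology.IsBounded A ∧
    ∀ x : ℕ → E, (∀ n, x n ∈ solHull A) →
      (∀ n m, n ≠ m → |x n| ⊓ |x m| = 0) →
        Tendsto (fun n => ‖x n‖) atTop (𝓝 0)

/-- The order continuous part `E^a` of a Banach lattice `E`. -/
def orderContinuousPart (E : Type*) [NormedAddCommGroup E] [Lattice E] [HasSolidNorm E] [IsOrderedAddMonoid E] : Set E :=
  {x | ∀ y : ℕ → E, Antitone y → (∀ n, 0 ≤ y n) → (∀ n, y n ≤ |x|) →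
        IsGLB (Set.range y) 0 → Tendsto (fun n => ‖y n‖) atTop (𝓝 0)}

section Aux

variable {E : Type*} [NormedAddCommGroup E] [Lattice E] [HasSolidNorm E] [IsOrderedAddMonoid E]

lemma aux_sub_inf_eq (a b : E) : a - a ⊓ b = (a - b)⁺ := by
  rw [posPart_def, sub_inf, sub_self, sup_comm]

lemma aux_inf_add_le {a b c : E} (ha : 0 ≤ a) (hb : 0 ≤ b) (hc : 0 ≤ c) :
    a ⊓ (b + c) ≤ a ⊓ b + a ⊓ c := by
  have h1 : a ⊓ (b + c) ≤ a ⊓ b + c := by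
    have h := inf_le_inf_right (b + c) (le_add_of_nonneg_right hc (a := a))
    rwa [← inf_add] at h
  have h2 : a ⊓ (b + c) ≤ a ⊓ b + a :=
    le_trans inf_le_left (le_add_of_nonneg_left (le_inf ha hb))
  calc a ⊓ (b + c) ≤ (a ⊓ b + c) ⊓ (a ⊓ b + a) := le_inf h1 h2
    _ = a ⊓ b + c ⊓ a := by rw [add_inf]
    _ = a ⊓ b + a ⊓ c := by rw [inf_comm c a]

lemma aux_inf_nsmul_le {a b : E} (ha : 0 ≤ a) (hb : 0 ≤ b) (n : ℕ) :
    a ⊓ (n • b) ≤ n • (a ⊓ b) := by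
  induction n with
  | zero => simp [inf_eq_right.mpr ha]
  | succ n ih =>
    rw [succ_nsmul, succ_nsmul]
    calc a ⊓ (n • b + b) ≤ a ⊓ (n • b) + a ⊓ b :=
          aux_inf_add_le ha (nsmul_nonneg hb n) hb
      _ ≤ n • (a ⊓ b) + a ⊓ b := add_le_add_left ih _

lemma aux_inf_sum_eq_zero {a : E} (ha : 0 ≤ a) {s : Finset ℕ} {f : ℕ → E} :
    (∀ i ∈ s, 0 ≤ f i) → (∀ i ∈ s, a ⊓ f i = 0) → a ⊓ (∑ i ∈ s, f i) = 0 := by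
  classical
  induction s using Finset.induction_on with
  | empty => intro _ _; simp [inf_eq_right.mpr ha]
  | @insert j t hj ih =>
    intro hf h
    rw [Finset.sum_insert hj]
    have hft : 0 ≤ ∑ i ∈ t, f i :=
      Finset.sum_nonneg fun i hi => hf i (Finset.mem_insert_of_mem hi)
    have h2 : a ⊓ (∑ i ∈ t, f i) = 0 :=
      ih (fun i hi => hf i (Finset.mem_insert_of_mem hi))
        (fun i hi => h i (Finset.mem_insert_of_mem hi))
    refine le_antisymm ?_ (le_inf ha (add_nonneg (hf j (Finset.mem_insert_self _ _)) hft))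
    calc a ⊓ (f j + ∑ i ∈ t, f i) ≤ a ⊓ f j + a ⊓ (∑ i ∈ t, f i) :=
          aux_inf_add_le ha (hf j (Finset.mem_insert_self _ _)) hft
      _ = 0 := by rw [h j (Finset.mem_insert_self _ _), h2, add_zero]

lemma aux_nsmul_inf_ge (n : ℕ) (a b : E) : (n • a) ⊓ (n • b) ≤ n • (a ⊓ b) := by
  have ha' : 0 ≤ a - a ⊓ b := sub_nonneg.2 inf_le_left
  have hb' : 0 ≤ b - a ⊓ b := sub_nonneg.2 inf_le_right
  have hd : (b - a ⊓ b) ⊓ (a - a ⊓ b) = 0 := by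
    rw [← inf_sub, inf_comm b a, sub_self]
  have key : (n • (a - a ⊓ b)) ⊓ (n • (b - a ⊓ b)) ≤ 0 := by
    have i1 : (n • (a - a ⊓ b)) ⊓ (n • (b - a ⊓ b)) ≤ n • ((n • (a - a ⊓ b)) ⊓ (b - a ⊓ b)) :=
      aux_inf_nsmul_le (nsmul_nonneg ha' n) hb' n
    have i2 : (n • (a - a ⊓ b)) ⊓ (b - a ⊓ b) ≤ 0 := by
      have := aux_inf_nsmul_le hb' ha' n
      rw [inf_comm]
      calc (b - a ⊓ b) ⊓ (n • (a - a ⊓ b)) ≤ n • ((b - a ⊓ b) ⊓ (a - a ⊓ b)) := this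
        _ = 0 := by rw [hd, smul_zero]
    calc (n • (a - a ⊓ b)) ⊓ (n • (b - a ⊓ b)) ≤ n • ((n • (a - a ⊓ b)) ⊓ (b - a ⊓ b)) := i1
      _ ≤ n • (0 : E) := nsmul_le_nsmul_right i2 n
      _ = 0 := smul_zero n
  have e1 : n • a = n • (a - a ⊓ b) + n • (a ⊓ b) := by
    rw [← nsmul_add, sub_add_cancel]
  have e2 : n • b = n • (b - a ⊓ b) + n • (a ⊓ b) := by
    rw [← nsmul_add, sub_add_cancel]
  calc (n • a) ⊓ (n • b)
      = (n • (a - a ⊓ b) + n • (a ⊓ b)) ⊓ (n • (b - a ⊓ b) + n • (a ⊓ b)) := by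
        rw [← e1, ← e2]
    _ = (n • (a - a ⊓ b)) ⊓ (n • (b - a ⊓ b)) + n • (a ⊓ b) := by rw [← inf_add]
    _ ≤ 0 + n • (a ⊓ b) := add_le_add_left key _
    _ = n • (a ⊓ b) := zero_add _

lemma aux_nonneg_of_nsmul_nonneg {x : E} {n : ℕ} (hn : 1 ≤ n) (h : 0 ≤ n • x) : 0 ≤ x := by
  have h1 : n • x⁻ ≤ n • x⁺ := by
    have hd : n • x⁺ - n • x⁻ = n • x := by rw [← nsmul_sub, posPart_sub_negPart]
    have h0 : 0 ≤ n • x⁺ - n • x⁻ := hd ▸ h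
    exact sub_nonneg.mp h0
  have h2 : x⁻ ≤ n • x⁻ := by
    calc x⁻ = 1 • x⁻ := (one_nsmul _).symm
      _ ≤ n • x⁻ := nsmul_le_nsmul_left (negPart_nonneg x) hn
  have h3 : x⁻ ≤ x⁻ ⊓ (n • x⁺) := le_inf le_rfl (h2.trans h1)
  have h4 : x⁻ ⊓ (n • x⁺) ≤ n • (x⁻ ⊓ x⁺) :=
    aux_inf_nsmul_le (negPart_nonneg x) (posPart_nonneg x) n
  have h5 : x⁻ ⊓ x⁺ = 0 := by rw [inf_comm]; exact posPart_inf_negPart_eq_zero x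
  have h6 : x⁻ ≤ 0 := by
    calc x⁻ ≤ n • (x⁻ ⊓ x⁺) := h3.trans h4
      _ = 0 := by rw [h5, smul_zero]
  have h7 : x⁻ = 0 := le_antisymm h6 (negPart_nonneg x)
  have h8 := posPart_sub_negPart x
  rw [h7, sub_zero] at h8
  rw [← h8]
  exact posPart_nonneg x

variable [NormedSpace ℝ E]

lemma aux_natCast_smul_nonneg {u : E} (hu : 0 ≤ u) (n : ℕ) : 0 ≤ (n : ℝ) • u := by
  rw [Nat.cast_smul_eq_nsmul]; exact nsmul_nonneg hu n

lemma aux_natCast_smul_mono {a b : E} (h : a ≤ b) (n : ℕ) : (n : ℝ) • a ≤ (n : ℝ) • b := by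
  have := aux_natCast_smul_nonneg (sub_nonneg.2 h) n
  rw [smul_sub] at this
  exact sub_nonneg.mp this

lemma aux_inv_natCast_smul_nonneg {u : E} (hu : 0 ≤ u) {n : ℕ} (hn : 1 ≤ n) :
    0 ≤ ((n : ℝ))⁻¹ • u := by
  apply aux_nonneg_of_nsmul_nonneg hn
  have hne : (n : ℝ) ≠ 0 := Nat.cast_ne_zero.mpr (by omega)
  have : n • (((n : ℝ))⁻¹ • u) = u := by
    rw [← Nat.cast_smul_eq_nsmul ℝ, smul_smul, mul_inv_cancel₀ hne, one_smul]
  rw [this]; exact hu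

lemma aux_inf_natCast_smul_le {a b : E} (ha : 0 ≤ a) (hb : 0 ≤ b) (n : ℕ) :
    a ⊓ ((n : ℝ) • b) ≤ (n : ℝ) • (a ⊓ b) := by
  rw [Nat.cast_smul_eq_nsmul, Nat.cast_smul_eq_nsmul]
  exact aux_inf_nsmul_le ha hb n

lemma aux_natCast_smul_inf_ge (n : ℕ) (a b : E) :
    ((n : ℝ) • a) ⊓ ((n : ℝ) • b) ≤ (n : ℝ) • (a ⊓ b) := by
  rw [Nat.cast_smul_eq_nsmul, Nat.cast_smul_eq_nsmul, Nat.cast_smul_eq_nsmul]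
  exact aux_nsmul_inf_ge n a b

omit [NormedSpace ℝ E] in
lemma aux_norm_mono {a b : E} (ha : 0 ≤ a) (h : a ≤ b) : ‖a‖ ≤ ‖b‖ := by
  apply norm_le_norm_of_abs_le_abs
  rw [abs_of_nonneg ha, abs_of_nonneg (ha.trans h)]
  exact h

omit [NormedSpace ℝ E] in
lemma aux_negPart_sub (a b : E) : (b - a)⁺ = (a - b)⁻ := by
  rw [negPart_def, neg_sub, posPart_def]

omit [NormedSpace ℝ E] in
lemma aux_posPart_le {a b : E} (h : a ≤ b) (hb : 0 ≤ b) : a⁺ ≤ b := by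
  rw [posPart_def]; exact sup_le h hb

lemma lemA (u : E) {M : ℕ} (hM : 1 ≤ M) (z : ℕ → E) (hz0 : ∀ k, 0 ≤ z k)
    (s : Finset ℕ) (hs : s.Nonempty) (hcard : s.card = M + 1)
    (hsum : ∑ i ∈ s, z i ≤ u) :
    s.inf' hs (fun i => (z i - ((M : ℝ))⁻¹ • u)⁺) = 0 := by
  have hu : 0 ≤ u := le_trans (Finset.sum_nonneg fun i _ => hz0 i) hsum
  set c : E := ((M : ℝ))⁻¹ • u with hc
  have hc0 : 0 ≤ c := aux_inv_natCast_smul_nonneg hu hM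
  have hne : (M : ℝ) ≠ 0 := Nat.cast_ne_zero.mpr (by omega)
  have hMc : (M : ℝ) • c = u := by rw [hc, smul_smul, mul_inv_cancel₀ hne, one_smul]
  set w := s.inf' hs (fun i => (z i - c)⁺) with hw
  have hw0 : 0 ≤ w := Finset.le_inf' hs _ fun i _ => posPart_nonneg _
  have hwle : ∀ i ∈ s, w ≤ (z i - c)⁺ := fun i hi => Finset.inf'_le _ hi
  have hwz : ∀ i ∈ s, w ≤ z i := fun i hi =>
    (hwle i hi).trans (aux_posPart_le (sub_le_self _ hc0) (hz0 i))
  have hdis : ∀ i ∈ s, w ⊓ (c - z i)⁺ = 0 := by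
    intro i hi
    refine le_antisymm ?_ (le_inf hw0 (posPart_nonneg _))
    calc w ⊓ (c - z i)⁺ ≤ (z i - c)⁺ ⊓ (c - z i)⁺ := inf_le_inf_right _ (hwle i hi)
      _ = (z i - c)⁺ ⊓ (z i - c)⁻ := by rw [aux_negPart_sub (z i) c]
      _ = 0 := posPart_inf_negPart_eq_zero _
  have hsumS : c ≤ ∑ i ∈ s, (c - z i)⁺ := by
    have h1 : ∑ i ∈ s, (c - z i) ≤ ∑ i ∈ s, (c - z i)⁺ :=
      Finset.sum_le_sum fun i _ => le_posPart _
    have h2 : ∑ i ∈ s, (c - z i) = (M + 1) • c - ∑ i ∈ s, z i := by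
      rw [Finset.sum_sub_distrib, Finset.sum_const, hcard]
    have hMc1 : (M + 1) • c = u + c := by
      rw [← Nat.cast_smul_eq_nsmul ℝ, Nat.cast_add, Nat.cast_one, add_smul, one_smul, hMc]
    have h3 : c ≤ (M + 1) • c - ∑ i ∈ s, z i := by
      rw [hMc1]
      calc c = u + c - u := by abel
        _ ≤ u + c - ∑ i ∈ s, z i := sub_le_sub_left hsum _
    exact h3.trans (h2 ▸ h1)
  have hwS : w ⊓ (∑ i ∈ s, (c - z i)⁺) = 0 :=
    aux_inf_sum_eq_zero hw0 (fun i _ => posPart_nonneg _) hdis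
  have hwc : w ⊓ c = 0 := by
    refine le_antisymm ?_ (le_inf hw0 hc0)
    calc w ⊓ c ≤ w ⊓ (∑ i ∈ s, (c - z i)⁺) := inf_le_inf_left w hsumS
      _ = 0 := hwS
  obtain ⟨i0, hi0⟩ := hs
  have hwu : w ≤ u :=
    (hwz i0 hi0).trans ((Finset.single_le_sum (fun i _ => hz0 i) hi0).trans hsum)
  have hfin : w ≤ (M : ℝ) • (w ⊓ c) := by
    calc w = w ⊓ u := (inf_eq_left.mpr hwu).symm
      _ = w ⊓ ((M : ℝ) • c) := by rw [hMc]
      _ ≤ (M : ℝ) • (w ⊓ c) := aux_inf_natCast_smul_le hw0 hc0 M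
  rw [hwc, smul_zero] at hfin
  exact le_antisymm hfin hw0

omit [NormedSpace ℝ E] in
lemma aux_inf'_const_inf (c : E) (f : ℕ → E) (s : Finset ℕ) (hs : s.Nonempty) :
    s.inf' hs (fun i => c ⊓ f i) = c ⊓ s.inf' hs f := by
  refine le_antisymm ?_ ?_
  · obtain ⟨i0, hi0⟩ := id hs
    refine le_inf ((Finset.inf'_le _ hi0).trans inf_le_left) ?_
    exact Finset.le_inf' hs f fun b hb => (Finset.inf'_le _ hb).trans inf_le_right
  · exact Finset.le_inf' hs (fun i => c ⊓ f i) fun b hb => inf_le_inf_left c (Finset.inf'_le _ hb)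

omit [NormedSpace ℝ E] in
lemma aux_posPart_sup (x y : E) : (x ⊔ y)⁺ = x⁺ ⊔ y⁺ := by
  rw [posPart_def, posPart_def, posPart_def, sup_sup_distrib_right]

lemma engine (u : E) (hu : 0 ≤ u)
    (H : ∀ x : ℕ → E, (∀ k, 0 ≤ x k) → (∀ k, x k ≤ u) →
      (∀ n m, n ≠ m → x n ⊓ x m = 0) → Tendsto (fun n => ‖x n‖) atTop (𝓝 0)) :
    ∀ (N : ℕ) (g : ℕ → E), (∀ k, 0 ≤ g k) → (∀ k, g k ≤ u) →
      (∀ (s : Finset ℕ) (hs : s.Nonempty), N + 1 ≤ s.card → s.inf' hs g = 0) →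
      Tendsto (fun k => ‖g k‖) atTop (𝓝 0) := by
  intro N
  induction N with
  | zero =>
    intro g hg0 hgu hmeet
    have hz : ∀ k, g k = 0 := by
      intro k
      have := hmeet {k} (Finset.singleton_nonempty k) (by simp)
      simpa using this
    have : (fun k => ‖g k‖) = fun _ => (0:ℝ) := by funext k; rw [hz k, norm_zero]
    rw [this]; exact tendsto_const_nhds
  | succ N IH =>
    intro g hg0 hgu hmeet
    by_contra hnot
    rw [Metric.tendsto_atTop] at hnot
    push_neg at hnot
    obtain ⟨δ, hδ, hfreq⟩ := hnot
    have hfreq' : ∃ᶠ k in atTop, δ ≤ ‖g k‖ := by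
      rw [frequently_atTop]
      intro N0
      obtain ⟨k, hk1, hk2⟩ := hfreq N0
      refine ⟨k, hk1, ?_⟩
      have : dist ‖g k‖ 0 = ‖g k‖ := by
        rw [Real.dist_eq, sub_zero, abs_of_nonneg (norm_nonneg _)]
      rw [← this]; exact hk2
    obtain ⟨φ, hφ, hφδ⟩ := extraction_of_frequently_atTop hfreq'
    set g1 : ℕ → E := g ∘ φ with hg1
    have hg10 : ∀ k, 0 ≤ g1 k := fun k => hg0 _
    have hg1u : ∀ k, g1 k ≤ u := fun k => hgu _
    have hmeet1 : ∀ (s : Finset ℕ) (hs : s.Nonempty), N + 2 ≤ s.card → s.inf' hs g1 = 0 := by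
      intro s hs hcard
      classical
      rw [hg1, Finset.inf'_comp_eq_image hs g]
      apply hmeet
      rwa [Finset.card_image_of_injective _ hφ.injective]
    have hconv : ∀ j : ℕ, Tendsto (fun k => ‖g1 j ⊓ g1 k‖) atTop (𝓝 0) := by
      intro j
      classical
      have hme : ∀ (s : Finset ℕ) (hs : s.Nonempty), N + 1 ≤ s.card →
          s.inf' hs (fun i => g1 j ⊓ g1 (j + 1 + i)) = 0 := by
        intro s hs hcard
        rw [aux_inf'_const_inf (g1 j) (fun i => g1 (j + 1 + i)) s hs]
        have himg : s.inf' hs (fun i => g1 (j + 1 + i)) =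
            (s.image (fun i => j + 1 + i)).inf' (hs.image _) g1 :=
          Finset.inf'_comp_eq_image hs g1
        rw [himg]
        have hnotmem : j ∉ s.image (fun i => j + 1 + i) := by
          simp only [Finset.mem_image]
          rintro ⟨i, -, hi⟩; omega
        have hins : g1 j ⊓ (s.image (fun i => j + 1 + i)).inf' (hs.image _) g1 =
            (insert j (s.image (fun i => j + 1 + i))).inf' (Finset.insert_nonempty _ _) g1 :=
          (Finset.inf'_insert (hs.image _) g1).symm
        rw [hins]
        apply hmeet1
        rw [Finset.card_insert_of_notMem hnotmem,
          Finset.card_image_of_injective _ (add_right_injective (j + 1))]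
        omega
      have hIH := IH (fun k => g1 j ⊓ g1 (j + 1 + k))
        (fun k => le_inf (hg10 j) (hg10 _))
        (fun k => le_trans inf_le_left (hg1u j))
        hme
      have heq : (fun k => ‖g1 j ⊓ g1 (j + 1 + k)‖) =
          (fun k => ‖g1 j ⊓ g1 k‖) ∘ (fun k : ℕ => k + (j + 1)) := by
        funext k
        simp only [Function.comp_apply]
        rw [show k + (j + 1) = j + 1 + k by omega]
      rw [heq] at hIH
      exact (tendsto_add_atTop_iff_nat (j + 1)).mp hIH
    -- the epsilon sequence
    set eps : ℕ → ℝ := fun l => δ / (2 * ((l : ℝ) + 1) * 4 ^ l) with heps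
    have hepspos : ∀ l, 0 < eps l := by
      intro l; rw [heps]; positivity
    have key : ∀ (T : ℕ) (ε : ℝ), 0 < ε → ∃ k, T < k ∧ ∀ j ≤ T, ‖g1 j ⊓ g1 k‖ ≤ ε := by
      intro T ε hε
      have hev : ∀ᶠ k in atTop, ∀ j ∈ Finset.range (T + 1), ‖g1 j ⊓ g1 k‖ ≤ ε := by
        rw [Filter.eventually_all_finset]
        intro j _
        exact (hconv j).eventually (eventually_le_nhds hε)
      obtain ⟨k, hk1, hk2⟩ := (hev.and (eventually_gt_atTop T)).exists
      exact ⟨k, hk2, fun j hj => hk1 j (Finset.mem_range.mpr (by omega))⟩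
    obtain ⟨F, hF0, hFs⟩ :
        ∃ F : ℕ → ℕ, F 0 = 0 ∧ ∀ l, F (l + 1) = (key (F l) (eps (l + 1)) (hepspos (l + 1))).choose :=
      ⟨fun n => Nat.rec 0 (fun l prev => (key prev (eps (l + 1)) (hepspos (l + 1))).choose) n,
        rfl, fun l => rfl⟩
    have hFlt : ∀ l, F l < F (l + 1) := by
      intro l; rw [hFs l]; exact (key (F l) (eps (l + 1)) (hepspos (l + 1))).choose_spec.1
    have hFmono : StrictMono F := strictMono_nat_of_lt_succ hFlt
    have hFsmall : ∀ j l, j < l → ‖g1 (F j) ⊓ g1 (F l)‖ ≤ eps l := by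
      intro j l hjl
      obtain ⟨l', rfl⟩ : ∃ l', l = l' + 1 := ⟨l - 1, by omega⟩
      have hle : F j ≤ F l' := hFmono.monotone (by omega)
      have hsp := (key (F l') (eps (l' + 1)) (hepspos (l' + 1))).choose_spec.2 (F j) hle
      rw [hFs l']
      exact hsp
    -- the almost disjoint subsequence and its disjointification
    set G : ℕ → E := fun l => g1 (F l) with hG
    have hG0 : ∀ l, 0 ≤ G l := fun l => hg10 _
    have hGu : ∀ l, G l ≤ u := fun l => hg1u _
    have hGδ : ∀ l, δ ≤ ‖G l‖ := fun l => hφδ _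
    have hGsmall : ∀ j l, j < l → ‖G j ⊓ G l‖ ≤ eps l := fun j l h => hFsmall j l h
    set V : ℕ → E := fun l => ∑ j ∈ Finset.range l, (G j ⊓ G l) with hV
    have hV0 : ∀ l, 0 ≤ V l := fun l => Finset.sum_nonneg fun j _ => le_inf (hG0 j) (hG0 l)
    have hc4 : ∀ m : ℕ, ((4 : ℝ) ^ m) = ((4 ^ m : ℕ) : ℝ) := by intro m; push_cast; ring
    set w : ℕ → E := fun l => ((4 : ℝ) ^ (l + 1))⁻¹ • u with hwdef
    have hwmul : ∀ l, ((4 : ℝ) ^ (l + 1)) • w l = u := by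
      intro l
      rw [hwdef]
      dsimp only
      rw [smul_smul, mul_inv_cancel₀ (by positivity), one_smul]
    have hw0 : ∀ l, 0 ≤ w l := by
      intro l
      rw [hwdef]; dsimp only
      rw [hc4 (l + 1)]
      exact aux_inv_natCast_smul_nonneg hu (Nat.one_le_iff_ne_zero.mpr (pow_ne_zero _ (by norm_num)))
    have hsmulV0 : ∀ l, 0 ≤ (4 : ℝ) ^ l • V l := by
      intro l; rw [hc4 l]; exact aux_natCast_smul_nonneg (hV0 l) _
    set e : ℕ → E := fun l => (G l - (4 : ℝ) ^ l • V l - w l)⁺ with he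
    have he0 : ∀ l, 0 ≤ e l := fun l => posPart_nonneg _
    have heG : ∀ l, e l ≤ G l := by
      intro l
      rw [he]; dsimp only
      refine aux_posPart_le ?_ (hG0 l)
      calc G l - (4 : ℝ) ^ l • V l - w l ≤ G l - (4 : ℝ) ^ l • V l := sub_le_self _ (hw0 l)
        _ ≤ G l := sub_le_self _ (hsmulV0 l)
    have heu : ∀ l, e l ≤ u := fun l => (heG l).trans (hGu l)
    -- pairwise disjointness
    have hdisj : ∀ m l, m < l → e m ⊓ e l = 0 := by
      intro m l hml
      have h1 : e m ≤ (w m - G m)⁻ := by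
        rw [he]; dsimp only
        have harg : G m - (4 : ℝ) ^ m • V m - w m ≤ G m - w m := by
          calc G m - (4 : ℝ) ^ m • V m - w m = G m - w m - (4 : ℝ) ^ m • V m := by abel
            _ ≤ G m - w m := sub_le_self _ (hsmulV0 m)
        calc (G m - (4 : ℝ) ^ m • V m - w m)⁺ ≤ (G m - w m)⁺ := posPart_mono harg
          _ = (w m - G m)⁻ := aux_negPart_sub (w m) (G m)
      have h2 : e l ≤ (4 : ℝ) ^ l • (w m - G m)⁺ := by
        have hVge : G m ⊓ G l ≤ V l :=
          Finset.single_le_sum (f := fun j => G j ⊓ G l)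
            (fun j _ => le_inf (hG0 j) (hG0 l)) (Finset.mem_range.mpr hml)
        have step1 : e l ≤ (G l - (4 : ℝ) ^ l • (G m ⊓ G l))⁺ := by
          rw [he]; dsimp only
          apply posPart_mono
          have hsm : (4 : ℝ) ^ l • (G m ⊓ G l) ≤ (4 : ℝ) ^ l • V l := by
            rw [hc4 l]; exact aux_natCast_smul_mono hVge _
          calc G l - (4 : ℝ) ^ l • V l - w l ≤ G l - (4 : ℝ) ^ l • V l := sub_le_self _ (hw0 l)
            _ ≤ G l - (4 : ℝ) ^ l • (G m ⊓ G l) := sub_le_sub_left hsm _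
        have step2 : (G l - (4 : ℝ) ^ l • (G m ⊓ G l))⁺ ≤ (G l - (4 : ℝ) ^ l • G m)⁺ := by
          have hsplit : G l - (4 : ℝ) ^ l • (G m ⊓ G l) ≤
              (G l - (4 : ℝ) ^ l • G m) ⊔ (G l - (4 : ℝ) ^ l • G l) := by
            have hge : ((4 : ℝ) ^ l • G m) ⊓ ((4 : ℝ) ^ l • G l) ≤ (4 : ℝ) ^ l • (G m ⊓ G l) := by
              rw [hc4 l]; exact aux_natCast_smul_inf_ge _ _ _
            calc G l - (4 : ℝ) ^ l • (G m ⊓ G l)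
                ≤ G l - ((4 : ℝ) ^ l • G m) ⊓ ((4 : ℝ) ^ l • G l) := sub_le_sub_left hge _
              _ = (G l - (4 : ℝ) ^ l • G m) ⊔ (G l - (4 : ℝ) ^ l • G l) := by rw [sub_inf]
          have hzero : (G l - (4 : ℝ) ^ l • G l)⁺ = 0 := by
            rw [posPart_eq_zero]
            have : G l ≤ (4 : ℝ) ^ l • G l := by
              have hcoef : 0 ≤ ((4 : ℝ) ^ l - 1) • G l := by
                have h1 : (1 : ℕ) ≤ 4 ^ l := Nat.one_le_iff_ne_zero.mpr (pow_ne_zero _ (by norm_num))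
                rw [show ((4 : ℝ) ^ l - 1) = ((4 ^ l - 1 : ℕ) : ℝ) by
                  rw [Nat.cast_sub h1]; push_cast; ring]
                exact aux_natCast_smul_nonneg (hG0 l) _
              rw [sub_smul, one_smul, sub_nonneg] at hcoef
              exact hcoef
            exact sub_nonpos.mpr this
          calc (G l - (4 : ℝ) ^ l • (G m ⊓ G l))⁺
              ≤ ((G l - (4 : ℝ) ^ l • G m) ⊔ (G l - (4 : ℝ) ^ l • G l))⁺ := posPart_mono hsplit
            _ = (G l - (4 : ℝ) ^ l • G m)⁺ ⊔ (G l - (4 : ℝ) ^ l • G l)⁺ := aux_posPart_sup _ _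
            _ = (G l - (4 : ℝ) ^ l • G m)⁺ := by rw [hzero, sup_of_le_left (posPart_nonneg _)]
        have step3 : (G l - (4 : ℝ) ^ l • G m)⁺ ≤ (u - (4 : ℝ) ^ l • G m)⁺ :=
          posPart_mono (sub_le_sub_right (hGu l) _)
        have hupow : u ≤ (4 : ℝ) ^ l • w m := by
          have hfac : (4 : ℝ) ^ l • w m = (4 : ℝ) ^ (l - m - 1) • u := by
            rw [show (4 : ℝ) ^ l = (4 : ℝ) ^ (l - m - 1) * (4 : ℝ) ^ (m + 1) by
              rw [← pow_add]; congr 1; omega]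
            rw [← smul_smul, hwmul m]
          rw [hfac]
          have hcoef : 0 ≤ ((4 : ℝ) ^ (l - m - 1) - 1) • u := by
            have h1 : (1 : ℕ) ≤ 4 ^ (l - m - 1) :=
              Nat.one_le_iff_ne_zero.mpr (pow_ne_zero _ (by norm_num))
            rw [show ((4 : ℝ) ^ (l - m - 1) - 1) = ((4 ^ (l - m - 1) - 1 : ℕ) : ℝ) by
              rw [Nat.cast_sub h1]; push_cast; ring]
            exact aux_natCast_smul_nonneg hu _
          rw [sub_smul, one_smul, sub_nonneg] at hcoef
          exact hcoef
        have step4 : (u - (4 : ℝ) ^ l • G m)⁺ ≤ ((4 : ℝ) ^ l • (w m - G m))⁺ := by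
          apply posPart_mono
          rw [smul_sub]
          exact sub_le_sub_right hupow _
        have step5 : ((4 : ℝ) ^ l • (w m - G m))⁺ ≤ (4 : ℝ) ^ l • (w m - G m)⁺ := by
          refine aux_posPart_le ?_ ?_
          · rw [hc4 l]; exact aux_natCast_smul_mono (le_posPart _) _
          · rw [hc4 l]; exact aux_natCast_smul_nonneg (posPart_nonneg _) _
        exact step1.trans (step2.trans (step3.trans (step4.trans step5)))
      refine le_antisymm ?_ (le_inf (he0 m) (he0 l))
      calc e m ⊓ e l ≤ (w m - G m)⁻ ⊓ ((4 : ℝ) ^ l • (w m - G m)⁺) := inf_le_inf h1 h2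
        _ ≤ (4 : ℝ) ^ l • ((w m - G m)⁻ ⊓ (w m - G m)⁺) := by
            rw [hc4 l]
            exact aux_inf_natCast_smul_le (negPart_nonneg _) (posPart_nonneg _) _
        _ = 0 := by rw [inf_comm, posPart_inf_negPart_eq_zero, smul_zero]
    -- norm lower bound for e
    have hVnorm : ∀ l, ‖V l‖ ≤ (l : ℝ) * eps l := by
      intro l
      calc ‖V l‖ ≤ ∑ j ∈ Finset.range l, ‖G j ⊓ G l‖ := norm_sum_le _ _
        _ ≤ ∑ j ∈ Finset.range l, eps l :=
            Finset.sum_le_sum fun j hj => hGsmall j l (Finset.mem_range.mp hj)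
        _ = (l : ℝ) * eps l := by rw [Finset.sum_const, Finset.card_range, nsmul_eq_mul]
    have henorm : ∀ l, δ - δ / 2 - ((4 : ℝ) ^ (l + 1))⁻¹ * ‖u‖ ≤ ‖e l‖ := by
      intro l
      have hq0 : 0 ≤ (4 : ℝ) ^ l • V l + w l := add_nonneg (hsmulV0 l) (hw0 l)
      have hid : G l = e l + G l ⊓ ((4 : ℝ) ^ l • V l + w l) := by
        have hsub := aux_sub_inf_eq (G l) ((4 : ℝ) ^ l • V l + w l)
        rw [← sub_sub] at hsub
        rw [he]; dsimp only
        rw [← hsub]; abel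
      have h1 : ‖G l‖ ≤ ‖e l‖ + ‖(4 : ℝ) ^ l • V l + w l‖ := by
        calc ‖G l‖ = ‖e l + G l ⊓ ((4 : ℝ) ^ l • V l + w l)‖ := by rw [← hid]
          _ ≤ ‖e l‖ + ‖G l ⊓ ((4 : ℝ) ^ l • V l + w l)‖ := norm_add_le _ _
          _ ≤ ‖e l‖ + ‖(4 : ℝ) ^ l • V l + w l‖ :=
              add_le_add_right (aux_norm_mono (le_inf (hG0 l) hq0) inf_le_right) _
      have h2 : ‖(4 : ℝ) ^ l • V l + w l‖ ≤
          (4 : ℝ) ^ l * ((l : ℝ) * eps l) + ((4 : ℝ) ^ (l + 1))⁻¹ * ‖u‖ := by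
        calc ‖(4 : ℝ) ^ l • V l + w l‖ ≤ ‖(4 : ℝ) ^ l • V l‖ + ‖w l‖ := norm_add_le _ _
          _ = (4 : ℝ) ^ l * ‖V l‖ + ((4 : ℝ) ^ (l + 1))⁻¹ * ‖u‖ := by
              rw [hwdef]; dsimp only
              rw [norm_smul, norm_smul, Real.norm_eq_abs, Real.norm_eq_abs,
                abs_of_pos (by positivity : (0:ℝ) < (4 : ℝ) ^ l),
                abs_of_pos (by positivity : (0:ℝ) < ((4 : ℝ) ^ (l + 1))⁻¹)]
          _ ≤ (4 : ℝ) ^ l * ((l : ℝ) * eps l) + ((4 : ℝ) ^ (l + 1))⁻¹ * ‖u‖ :=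
              add_le_add_left (mul_le_mul_of_nonneg_left (hVnorm l) (by positivity)) _
      have h3 : (4 : ℝ) ^ l * ((l : ℝ) * eps l) ≤ δ / 2 := by
        rw [heps]; dsimp only
        have h4l : (0 : ℝ) < 4 ^ l := by positivity
        have hl1 : (0 : ℝ) < (l : ℝ) + 1 := by positivity
        rw [show (4 : ℝ) ^ l * ((l : ℝ) * (δ / (2 * ((l : ℝ) + 1) * 4 ^ l))) =
            δ * ((l : ℝ) / (2 * ((l : ℝ) + 1))) by field_simp]
        have hfrac : (l : ℝ) / (2 * ((l : ℝ) + 1)) ≤ 1 / 2 := by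
          rw [div_le_div_iff₀ (by positivity) (by norm_num)]
          nlinarith
        calc δ * ((l : ℝ) / (2 * ((l : ℝ) + 1))) ≤ δ * (1 / 2) :=
              mul_le_mul_of_nonneg_left hfrac hδ.le
          _ = δ / 2 := by ring
      have := hGδ l
      linarith
    -- apply the disjointness hypothesis H and derive a contradiction
    have hHe : Tendsto (fun l => ‖e l‖) atTop (𝓝 0) := by
      apply H e he0 heu
      intro n m hnm
      rcases lt_or_gt_of_ne hnm with h | h
      · exact hdisj n m h
      · rw [inf_comm]; exact hdisj m n h
    have htail : Tendsto (fun l : ℕ => ((4 : ℝ) ^ (l + 1))⁻¹ * ‖u‖) atTop (𝓝 0) := by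
      have hbase : Tendsto (fun n : ℕ => ((4 : ℝ)⁻¹) ^ n) atTop (𝓝 0) :=
        tendsto_pow_atTop_nhds_zero_of_lt_one (by norm_num) (by norm_num)
      have hshift : Tendsto (fun n : ℕ => ((4 : ℝ)⁻¹) ^ (n + 1)) atTop (𝓝 0) :=
        (tendsto_add_atTop_iff_nat 1).mpr hbase
      have := hshift.mul_const ‖u‖
      rw [zero_mul] at this
      convert this using 2 with l
      rw [← inv_pow]
    have hev1 : ∀ᶠ l in atTop, ‖e l‖ < δ / 4 := hHe.eventually (eventually_lt_nhds (by positivity))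
    have hev2 : ∀ᶠ l in atTop, ((4 : ℝ) ^ (l + 1))⁻¹ * ‖u‖ < δ / 4 :=
      htail.eventually (eventually_lt_nhds (by positivity))
    obtain ⟨l, hl1, hl2⟩ := (hev1.and hev2).exists
    have := henorm l
    linarith

end Aux

/-- Every L-weakly compact subset of a Banach lattice is contained in the order continuous
part `E^a`. -/
theorem lwcSet_subset_orderContinuousPart
    {E : Type*} [NormedAddCommGroup E] [Lattice E] [HasSolidNorm E] [IsOrderedAddMonoid E] [NormedSpace ℝ E] [CompleteSpace E]
    (A : Set E) (hA : IsLwcSet A) :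
    A ⊆ orderContinuousPart E := by
  intro a ha
  intro y hanti hy0 hyle hglb
  by_contra hnot
  set u : E := |a| with hudef
  have hu : 0 ≤ u := abs_nonneg a
  have H : ∀ x : ℕ → E, (∀ k, 0 ≤ x k) → (∀ k, x k ≤ u) →
      (∀ n m, n ≠ m → x n ⊓ x m = 0) → Tendsto (fun n => ‖x n‖) atTop (𝓝 0) := by
    intro x hx0 hxu hd
    refine hA.2 x (fun n => ⟨a, ha, ?_⟩) (fun n m h => ?_)
    · rw [abs_of_nonneg (hx0 n)]; exact hxu n
    · rw [abs_of_nonneg (hx0 n), abs_of_nonneg (hx0 m)]; exact hd n m h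
  have hnc : ¬ CauchySeq y := by
    intro hC
    obtain ⟨p, hp⟩ := cauchySeq_tendsto_of_complete hC
    have hple : ∀ k, p ≤ y k := by
      intro k
      refine le_of_tendsto hp ?_
      exact eventually_atTop.mpr ⟨k, fun j hj => hanti hj⟩
    have h1 : p ≤ 0 := hglb.2 (by rintro b ⟨k, rfl⟩; exact hple k)
    have h2 : 0 ≤ p := ge_of_tendsto hp (Eventually.of_forall hy0)
    have hp0 : p = 0 := le_antisymm h1 h2
    exact hnot (by simpa [hp0] using hp.norm)
  rw [Metric.cauchySeq_iff] at hnc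
  push_neg at hnc
  obtain ⟨ε, hε, hgap⟩ := hnc
  have key2 : ∀ T : ℕ, ∃ q : ℕ × ℕ, T ≤ q.1 ∧ q.1 < q.2 ∧ ε ≤ ‖y q.1 - y q.2‖ := by
    intro T
    obtain ⟨i, hi, j, hj, hij⟩ := hgap T
    have hij' : ε ≤ dist (y i) (y j) := hij
    have hne : i ≠ j := by
      intro hh; rw [hh, dist_self] at hij'; linarith
    rcases lt_or_gt_of_ne hne with h | h
    · exact ⟨(i, j), hi, h, by rwa [dist_eq_norm] at hij'⟩
    · refine ⟨(j, i), hj, h, ?_⟩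
      rw [dist_comm, dist_eq_norm] at hij'
      exact hij'
  obtain ⟨P, hP0, hPs⟩ :
      ∃ P : ℕ → ℕ × ℕ, P 0 = (key2 0).choose ∧ ∀ k, P (k + 1) = (key2 (P k).2).choose :=
    ⟨fun k => Nat.rec (key2 0).choose (fun _ prev => (key2 prev.2).choose) k, rfl, fun k => rfl⟩
  have hnm : ∀ k, (P k).1 < (P k).2 := by
    intro k
    cases k with
    | zero => rw [hP0]; exact (key2 0).choose_spec.2.1
    | succ k => rw [hPs k]; exact (key2 (P k).2).choose_spec.2.1
  have hynorm : ∀ k, ε ≤ ‖y (P k).1 - y (P k).2‖ := by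
    intro k
    cases k with
    | zero => rw [hP0]; exact (key2 0).choose_spec.2.2
    | succ k => rw [hPs k]; exact (key2 (P k).2).choose_spec.2.2
  have hmn : ∀ k, (P k).2 ≤ (P (k + 1)).1 := by
    intro k
    rw [hPs k]
    exact (key2 (P k).2).choose_spec.1
  set z : ℕ → E := fun k => y (P k).1 - y (P k).2 with hz
  have hz0 : ∀ k, 0 ≤ z k := fun k => sub_nonneg.2 (hanti (hnm k).le)
  have hzu : ∀ k, z k ≤ u := fun k =>
    le_trans (sub_le_self _ (hy0 _)) (hyle _)
  have hzn : ∀ k, ε ≤ ‖z k‖ := fun k => hynorm k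
  have htel : ∀ K, ∑ k ∈ Finset.range (K + 1), z k ≤ y (P 0).1 - y (P K).2 := by
    intro K
    induction K with
    | zero => rw [Finset.sum_range_one]
    | succ K ih =>
      rw [Finset.sum_range_succ]
      have hstep : y (P (K + 1)).1 ≤ y (P K).2 := hanti (hmn K)
      calc ∑ k ∈ Finset.range (K + 1), z k + z (K + 1)
          ≤ (y (P 0).1 - y (P K).2) + (y (P (K + 1)).1 - y (P (K + 1)).2) :=
            add_le_add_left ih _
        _ = (y (P 0).1 - y (P (K + 1)).2) + (y (P (K + 1)).1 - y (P K).2) := by abel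
        _ ≤ (y (P 0).1 - y (P (K + 1)).2) + 0 :=
            add_le_add_right (sub_nonpos.mpr hstep) _
        _ = y (P 0).1 - y (P (K + 1)).2 := add_zero _
  have hsum : ∀ s : Finset ℕ, ∑ k ∈ s, z k ≤ u := by
    intro s
    rcases s.eq_empty_or_nonempty with rfl | hne
    · simpa using hu
    · have hsub : s ⊆ Finset.range (s.max' hne + 1) := fun i hi =>
        Finset.mem_range.mpr (by have := Finset.le_max' s i hi; omega)
      calc ∑ k ∈ s, z k ≤ ∑ k ∈ Finset.range (s.max' hne + 1), z k :=
            Finset.sum_le_sum_of_subset_of_nonneg hsub (fun i _ _ => hz0 i)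
        _ ≤ y (P 0).1 - y (P (s.max' hne)).2 := htel _
        _ ≤ y (P 0).1 := sub_le_self _ (hy0 _)
        _ ≤ u := hyle _
  set M : ℕ := max 1 ⌈(2 * ‖u‖) / ε⌉₊ with hMdef
  have hM1 : 1 ≤ M := le_max_left _ _
  have hMpos : (0 : ℝ) < (M : ℝ) := by
    have : (1 : ℕ) ≤ M := hM1
    exact_mod_cast Nat.lt_of_lt_of_le Nat.zero_lt_one this
  have hMbound : ((M : ℝ))⁻¹ * ‖u‖ ≤ ε / 2 := by
    have hM2 : (2 * ‖u‖) / ε ≤ (M : ℝ) := by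
      refine le_trans (Nat.le_ceil _) ?_
      exact_mod_cast Nat.cast_le.mpr (le_max_right 1 ⌈(2 * ‖u‖) / ε⌉₊)
    have hnu : ‖u‖ ≤ ε / 2 * (M : ℝ) := by
      have h := mul_le_mul_of_nonneg_left hM2 (half_pos hε).le
      calc ‖u‖ = ε / 2 * ((2 * ‖u‖) / ε) := by field_simp
        _ ≤ ε / 2 * (M : ℝ) := h
    calc ((M : ℝ))⁻¹ * ‖u‖ ≤ ((M : ℝ))⁻¹ * (ε / 2 * (M : ℝ)) :=
          mul_le_mul_of_nonneg_left hnu (by positivity)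
      _ = ε / 2 := by field_simp
  have hcM0 : 0 ≤ ((M : ℝ))⁻¹ • u := aux_inv_natCast_smul_nonneg hu hM1
  set D : ℕ → E := fun k => (z k - ((M : ℝ))⁻¹ • u)⁺ with hD
  have hD0 : ∀ k, 0 ≤ D k := fun k => posPart_nonneg _
  have hDu : ∀ k, D k ≤ u := fun k =>
    aux_posPart_le (le_trans (sub_le_self _ hcM0) (hzu k)) hu
  have hDnorm : ∀ k, ε / 2 ≤ ‖D k‖ := by
    intro k
    have hsubeq := aux_sub_inf_eq (z k) (((M : ℝ))⁻¹ • u)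
    have hzk : z k = D k + z k ⊓ (((M : ℝ))⁻¹ • u) := by
      rw [hD]; dsimp only
      rw [← hsubeq]; abel
    have hn1 : ‖z k‖ ≤ ‖D k‖ + ‖z k ⊓ (((M : ℝ))⁻¹ • u)‖ := by
      conv_lhs => rw [hzk]
      exact norm_add_le _ _
    have hn2 : ‖z k ⊓ (((M : ℝ))⁻¹ • u)‖ ≤ ((M : ℝ))⁻¹ * ‖u‖ := by
      have := aux_norm_mono (le_inf (hz0 k) hcM0) (inf_le_right (a := z k))
      calc ‖z k ⊓ (((M : ℝ))⁻¹ • u)‖ ≤ ‖((M : ℝ))⁻¹ • u‖ := this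
        _ = ((M : ℝ))⁻¹ * ‖u‖ := by
            rw [norm_smul, Real.norm_eq_abs, abs_of_nonneg (by positivity)]
    have := hzn k
    linarith [hMbound]
  have hDmeet : ∀ (s : Finset ℕ) (hs : s.Nonempty), M + 1 ≤ s.card → s.inf' hs D = 0 := by
    intro s hs hcard
    obtain ⟨t, hts, htcard⟩ := Finset.exists_subset_card_eq hcard
    have htne : t.Nonempty := Finset.card_pos.mp (by omega)
    have ht0 : t.inf' htne (fun i => (z i - ((M : ℝ))⁻¹ • u)⁺) = 0 :=
      lemA u hM1 z hz0 t htne htcard (hsum t)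
    refine le_antisymm ?_ (Finset.le_inf' hs D fun i _ => posPart_nonneg _)
    calc s.inf' hs D ≤ t.inf' htne D :=
          Finset.le_inf' htne D fun b hb => Finset.inf'_le D (hts hb)
      _ = 0 := ht0
  have hfinal := engine u hu H M D hD0 hDu hDmeet
  obtain ⟨k, hk⟩ := (hfinal.eventually (eventually_lt_nhds (half_pos hε))).exists
  linarith [hDnorm k]
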